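/- Let K be a densely defined operator on a Banach space E with ρ(K) ≠ ∅, let F be a Banach space with [D(K)] ↪ F ↪ E densely, and suppose the operator matrix 𝐊 := [[0, I_F],[K, 0]] with domain D(K) × F generates a strongly continuous semigroup (T(t)) on F × E. Then the upper-left entry C(t) of T(t) (i.e., the compression of T(t) to the first coordinate, mapping f ∈ F ⊂ E to the first component of T(t)(f,0)), extended evenly to ℝ, satisfies C(t+s)+C(t-s)=2C(t)C(s) and C(0)=I on E. -/

import Mathlib

open Set Filter Asymptotics Topology

/-- If the reduction matrix 𝐊 = [[0, I_F],[K, 0]] with domain D(K) × F generates a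
strongly continuous semigroup (T(t)) on F × E, then the compression C(t) of T(t) to the
first coordinate (mapping f ∈ F ⊂ E to the first component of T(t)(f,0)), extended
evenly to ℝ, is a cosine operator function on E. -/
theorem compression_of_reduction_semigroup_is_cosine
    {E F : Type*}
    [NormedAddCommGroup E] [NormedSpace ℝ E] [CompleteSpace E]
    [NormedAddCommGroup F] [NormedSpace ℝ F] [CompleteSpace F]
    -- continuous dense embedding F ↪ E
    (i : F →L[ℝ] E) (hi : Function.Injective i) (hdense : DenseRange i)
    -- the domain D(K) ⊂ F, densely embedded in F, and the operator K : D(K) → E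
    (DK : Submodule ℝ F) (hDK : Dense (DK : Set F))
    (K : DK →ₗ[ℝ] E)
    -- T is a strongly continuous semigroup on F × E …
    (T : ℝ → (F × E) →L[ℝ] (F × E))
    (hT0 : T 0 = 1)
    (hTadd : ∀ t s : ℝ, 0 ≤ t → 0 ≤ s → T (t + s) = T t ∘L T s)
    (hTcont : ∀ p : F × E, ContinuousOn (fun t => T t p) (Ici 0))
    -- … generated by the operator matrix 𝐊(u,v) = (v, Ku) with domain D(K) × F :
    (hgen : ∀ (u : DK) (v : F),
      HasDerivWithinAt (fun t => T t ((u : F), i v)) ((v : F), K u) (Ici 0) 0)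
    (hmax : ∀ (p d : F × E), HasDerivWithinAt (fun t => T t p) d (Ici 0) 0 →
      ∃ (u : DK) (v : F), p = ((u : F), i v))
    -- C is the even extension of the compression of T(t) to the first coordinate
    (C : ℝ → E →L[ℝ] E)
    (hCcont : ∀ x : E, Continuous fun t => C t x)
    (hCdef : ∀ t : ℝ, 0 ≤ t → ∀ f : F, C t (i f) = i (T t (f, 0)).1)
    (hCeven : ∀ t : ℝ, C (-t) = C t) :
    C 0 = 1 ∧ ∀ t s : ℝ, C (t + s) + C (t - s) = 2 • (C t ∘L C s) := by
  classical
  -- the reflection R (f, e) = (f, -e)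
  set R : (F × E) →L[ℝ] (F × E) :=
    (ContinuousLinearMap.fst ℝ F E).prod (-(ContinuousLinearMap.snd ℝ F E)) with hRdef
  have hRapply : ∀ p : F × E, R p = (p.1, -p.2) := fun p => rfl
  -- local uniform boundedness of the semigroup (Banach–Steinhaus)
  have hbound : ∀ b : ℝ, ∃ M : ℝ, ∀ k, k ∈ Icc (0:ℝ) b → ‖T k‖ ≤ M := by
    intro b
    rcases le_or_gt b 0 with hb | hb
    · refine ⟨‖T 0‖, fun k hk => ?_⟩
      have : k = 0 := le_antisymm (hk.2.trans hb) hk.1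
      rw [this]
    · have h := banach_steinhaus (ι := Icc (0:ℝ) b) (g := fun k => T k.1) ?_
      · obtain ⟨M, hM⟩ := h
        exact ⟨M, fun k hk => hM ⟨k, hk⟩⟩
      · intro p
        obtain ⟨Cb, hCb⟩ := (isCompact_Icc (a := (0:ℝ)) (b := b)).exists_bound_of_continuousOn
          ((hTcont p).mono Icc_subset_Ici_self)
        exact ⟨Cb, fun k => hCb k.1 k.2⟩
  -- differentiating k ↦ T k (f k) at 0⁺
  have hB2 : ∀ (f : ℝ → F × E) (d e : F × E),
      HasDerivWithinAt f d (Ici 0) 0 →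
      HasDerivWithinAt (fun k => T k (f 0)) e (Ici 0) 0 →
      HasDerivWithinAt (fun k => T k (f k)) (e + d) (Ici 0) 0 := by
    intro f d e hf he
    rw [hasDerivWithinAt_iff_isLittleO] at hf he ⊢
    simp only [sub_zero] at hf he ⊢
    obtain ⟨M, hM⟩ := hbound 1
    have hmem : Icc (0:ℝ) 1 ∈ 𝓝[Ici 0] (0:ℝ) :=
      Icc_mem_nhdsGE_of_mem ⟨le_refl 0, zero_lt_one⟩
    have h1 : (fun k => T k (f k - f 0 - k • d)) =o[𝓝[Ici 0] 0] fun k : ℝ => k := by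
      have hO : (fun k => T k (f k - f 0 - k • d)) =O[𝓝[Ici 0] 0]
          (fun k => f k - f 0 - k • d) := by
        rw [isBigO_iff]
        refine ⟨M, ?_⟩
        filter_upwards [hmem] with k hk
        exact ((T k).le_opNorm _).trans
          (mul_le_mul_of_nonneg_right (hM k hk) (norm_nonneg _))
      exact hO.trans_isLittleO hf
    have h2 : (fun k : ℝ => k • (T k d - d)) =o[𝓝[Ici 0] 0] fun k : ℝ => k := by
      rw [isLittleO_iff]
      intro c hc
      have ht : Tendsto (fun k => T k d) (𝓝[Ici 0] 0) (𝓝 d) := by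
        have h0 := ((hTcont d) 0 self_mem_Ici).tendsto
        simpa [hT0] using h0
      have hev : ∀ᶠ k in 𝓝[Ici 0] (0:ℝ), ‖T k d - d‖ ≤ c := by
        have hball : ∀ᶠ y in 𝓝 d, ‖y - d‖ ≤ c := by
          filter_upwards [Metric.closedBall_mem_nhds d hc] with y hy
          simpa [dist_eq_norm] using hy
        exact ht.eventually hball
      filter_upwards [hev] with k hk
      rw [norm_smul]
      calc ‖k‖ * ‖T k d - d‖ ≤ ‖k‖ * c := by
            exact mul_le_mul_of_nonneg_left hk (norm_nonneg _)
        _ = c * ‖k‖ := mul_comm _ _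
    have hsum := (h1.add h2).add he
    refine hsum.congr' (Eventually.of_forall fun k => ?_) EventuallyEq.rfl
    show T k (f k - f 0 - k • d) + k • (T k d - d) + (T k (f 0) - T 0 (f 0) - k • e)
        = T k (f k) - T 0 (f 0) - k • (e + d)
    rw [hT0]
    simp only [map_sub, map_smul, ContinuousLinearMap.one_apply, smul_add, smul_sub]
    abel
  -- invariance of the domain under the semigroup
  have hB3 : ∀ x : ℝ, 0 ≤ x → ∀ (u : DK) (v : F), ∃ (u' : DK) (v' : F),
      T x ((u : F), i v) = ((u' : F), i v') := by
    intro x hx u v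
    have h1 := hgen u v
    have h3 : HasDerivWithinAt (fun k => T x (T k ((u : F), i v)))
        (T x ((v : F), K u)) (Ici 0) 0 := (T x).hasFDerivAt.comp_hasDerivWithinAt 0 h1
    have h2 : HasDerivWithinAt (fun k => T k (T x ((u : F), i v)))
        (T x ((v : F), K u)) (Ici 0) 0 := by
      refine h3.congr (fun k hk => ?_) ?_
      · rw [← ContinuousLinearMap.comp_apply, ← hTadd k x hk hx, add_comm,
          hTadd x k hx hk, ContinuousLinearMap.comp_apply]
      · rw [hT0]
        simp
    exact hmax _ _ h2
  -- continuity of s ↦ T s (R (T s p)) on compact intervals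
  have hcontg : ∀ (b : ℝ) (p : F × E),
      ContinuousOn (fun s => T s (R (T s p))) (Icc 0 b) := by
    intro b p
    obtain ⟨M, hM⟩ := hbound b
    intro s₀ hs₀
    have hTp : Tendsto (fun s => T s p) (𝓝[Icc 0 b] s₀) (𝓝 (T s₀ p)) :=
      ((hTcont p).mono Icc_subset_Ici_self) s₀ hs₀
    have hR1 : Tendsto (fun s => R (T s p) - R (T s₀ p)) (𝓝[Icc 0 b] s₀) (𝓝 0) := by
      have h := (R.continuous.tendsto (T s₀ p)).comp hTp
      have h2 := h.sub_const (R (T s₀ p))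
      simpa using h2
    have hpart1 : Tendsto (fun s => T s (R (T s p)) - T s (R (T s₀ p)))
        (𝓝[Icc 0 b] s₀) (𝓝 0) := by
      rw [tendsto_zero_iff_norm_tendsto_zero]
      have hub : Tendsto (fun s => M * ‖R (T s p) - R (T s₀ p)‖) (𝓝[Icc 0 b] s₀) (𝓝 0) := by
        have := (hR1.norm).const_mul M
        simpa using this
      refine squeeze_zero' (Eventually.of_forall fun s => norm_nonneg _) ?_ hub
      filter_upwards [self_mem_nhdsWithin] with s hs
      calc ‖T s (R (T s p)) - T s (R (T s₀ p))‖
          = ‖T s (R (T s p) - R (T s₀ p))‖ := by rw [map_sub]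
        _ ≤ M * ‖R (T s p) - R (T s₀ p)‖ :=
            ((T s).le_opNorm _).trans
              (mul_le_mul_of_nonneg_right (hM s hs) (norm_nonneg _))
    have hpart2 : Tendsto (fun s => T s (R (T s₀ p)))
        (𝓝[Icc 0 b] s₀) (𝓝 (T s₀ (R (T s₀ p)))) :=
      ((hTcont (R (T s₀ p))).mono Icc_subset_Ici_self) s₀ hs₀
    have := hpart1.add hpart2
    simpa [ContinuousWithinAt] using this
  -- the key identity on the domain
  have hkeyD : ∀ t, 0 ≤ t → ∀ (u : DK) (v : F),
      T t (R (T t ((u:F), i v))) = R ((u:F), i v) := by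
    intro t ht u v
    set p : F × E := ((u:F), i v) with hp
    have hder : ∀ x ∈ Ico (0:ℝ) t, HasDerivWithinAt (fun s => T s (R (T s p))) 0 (Ici x) x := by
      intro x hx
      obtain ⟨u', v', hq⟩ := hB3 x hx.1 u v
      have hψ : HasDerivWithinAt (fun k => T k (R (T k (T x p)))) 0 (Ici 0) 0 := by
        have hf : HasDerivWithinAt (fun k => R (T k (T x p)))
            (R ((v' : F), K u')) (Ici 0) 0 := by
          have hg : HasDerivWithinAt (fun k => T k (T x p)) ((v' : F), K u') (Ici 0) 0 := by
            rw [hq]; exact hgen u' v'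
          exact R.hasFDerivAt.comp_hasDerivWithinAt 0 hg
        have hf0 : R (T 0 (T x p)) = (((u' : F), i (-v')) : F × E) := by
          rw [hT0]
          simp [hp, hq, hRapply]
        have he : HasDerivWithinAt (fun k => T k (R (T 0 (T x p))))
            (((-v' : F), K u') : F × E) (Ici 0) 0 := by
          rw [hf0]; exact hgen u' (-v')
        have hres := hB2 (fun k => R (T k (T x p))) (R ((v' : F), K u'))
          (((-v' : F), K u')) hf he
        have hzero : ((((-v' : F), K u') : F × E) + R ((v' : F), K u')) = 0 := by
          rw [hRapply]
          simp [Prod.ext_iff]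
        rw [hzero] at hres
        exact hres
      -- shift to x
      have hsub : HasDerivWithinAt (fun s : ℝ => s - x) 1 (Ici x) x := by
        simpa using (hasDerivWithinAt_id x (Ici x)).sub_const x
      have hmaps : MapsTo (fun s : ℝ => s - x) (Ici x) (Ici 0) :=
        fun s hs => show (0:ℝ) ≤ s - x from sub_nonneg.2 hs
      have h1 : HasDerivWithinAt ((fun k => T k (R (T k (T x p)))) ∘ (fun s => s - x))
          ((1:ℝ) • (0 : F × E)) (Ici x) x :=
        HasDerivWithinAt.scomp_of_eq x hψ hsub hmaps (by simp)
      have h2 := (T x).hasFDerivAt.comp_hasDerivWithinAt x h1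
      have h2' : HasDerivWithinAt
          (fun s => T x (T (s - x) (R (T (s - x) (T x p))))) 0 (Ici x) x := by
        simpa [Function.comp_def] using h2
      refine h2'.congr (fun s hs => ?_) ?_
      · have hsx : (0:ℝ) ≤ s - x := sub_nonneg.2 hs
        have e1 : T s p = T (s - x) (T x p) := by
          have h := hTadd (s - x) x hsx hx.1
          rw [show s - x + x = s from by ring] at h
          rw [h, ContinuousLinearMap.comp_apply]
        have e2 : ∀ y, T s y = T x (T (s - x) y) := by
          intro y
          have h := hTadd x (s - x) hx.1 hsx
          rw [show x + (s - x) = s from by ring] at h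
          rw [h, ContinuousLinearMap.comp_apply]
        rw [e1, e2]
      · rw [sub_self, hT0]
        simp
    have hconst := constant_of_has_deriv_right_zero (hcontg t p) hder t (right_mem_Icc.2 ht)
    rw [hT0] at hconst
    simpa using hconst
  -- the key identity everywhere, by density
  have hkey : ∀ t, 0 ≤ t → ∀ p : F × E, T t (R (T t p)) = R p := by
    intro t ht
    have hd : Dense ((DK : Set F) ×ˢ (range i) : Set (F × E)) := hDK.prod hdense
    have heq : (fun p : F × E => T t (R (T t p))) = fun p => R p := by
      refine Continuous.ext_on hd
        ((T t).continuous.comp (R.continuous.comp (T t).continuous)) R.continuous ?_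
      rintro ⟨x, y⟩ ⟨hx, v, rfl⟩
      exact hkeyD t ht ⟨x, hx⟩ v
    exact fun p => congrFun heq p
  -- the cosine functional equation on the range of i, for 0 ≤ s ≤ t
  have hmain : ∀ t s : ℝ, 0 ≤ s → s ≤ t → ∀ f : F,
      (C (t+s)) (i f) + (C (t-s)) (i f) = C t (C s (i f)) + C t (C s (i f)) ∧
      (C (t+s)) (i f) + (C (t-s)) (i f) = C s (C t (i f)) + C s (C t (i f)) := by
    intro t s hs hst f
    have ht : 0 ≤ t := hs.trans hst
    have hts : 0 ≤ t - s := sub_nonneg.2 hst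
    have htps : 0 ≤ t + s := by linarith
    set p : F × E := (f, 0) with hp
    have hRp : R p = p := by
      rw [hRapply]; simp [hp]
    constructor
    · -- first version : 2 C t C s
      have h1 : T (t+s) p = T t (T s p) := by
        rw [hTadd t s ht hs, ContinuousLinearMap.comp_apply]
      have h2 : T (t-s) p = T t (R (T s p)) := by
        calc T (t-s) p = T (t-s) (R p) := by rw [hRp]
          _ = T (t-s) (T s (R (T s p))) := by rw [hkey s hs p]
          _ = T t (R (T s p)) := by
              have h := hTadd (t-s) s hts hs
              rw [show t - s + s = t from by ring] at h
              rw [h, ContinuousLinearMap.comp_apply]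
      have hadd : T s p + R (T s p) = (((T s p).1, 0) : F × E) + ((T s p).1, 0) := by
        rw [hRapply]
        simp [Prod.ext_iff]
      have hF : (T (t+s) p).1 + (T (t-s) p).1
          = (T t ((T s p).1, 0)).1 + (T t ((T s p).1, 0)).1 := by
        calc (T (t+s) p).1 + (T (t-s) p).1
            = (T t (T s p)).1 + (T t (R (T s p))).1 := by rw [h1, h2]
          _ = (T t (T s p) + T t (R (T s p))).1 := (Prod.fst_add _ _).symm
          _ = (T t (T s p + R (T s p))).1 := by rw [map_add]
          _ = (T t (((T s p).1, 0) + ((T s p).1, 0))).1 := by rw [hadd]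
          _ = (T t ((T s p).1, 0)).1 + (T t ((T s p).1, 0)).1 := by
              rw [map_add, Prod.fst_add]
      rw [hCdef _ htps f, hCdef _ hts f, hCdef _ hs f, hCdef _ ht ((T s p).1),
        ← map_add, ← map_add, hF]
    · -- second version : 2 C s C t
      have h1 : T (t+s) p = T s (T t p) := by
        rw [show t + s = s + t from add_comm t s, hTadd s t hs ht,
          ContinuousLinearMap.comp_apply]
      have h2 : T s (R (T t p)) = R (T (t-s) p) := by
        have e : T t p = T s (T (t-s) p) := by
          have h := hTadd s (t-s) hs hts
          rw [show s + (t - s) = t from by ring] at h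
          rw [h, ContinuousLinearMap.comp_apply]
        rw [e, hkey s hs (T (t-s) p)]
      have hadd : T t p + R (T t p) = (((T t p).1, 0) : F × E) + ((T t p).1, 0) := by
        rw [hRapply]
        simp [Prod.ext_iff]
      have hF : (T (t+s) p).1 + (T (t-s) p).1
          = (T s ((T t p).1, 0)).1 + (T s ((T t p).1, 0)).1 := by
        calc (T (t+s) p).1 + (T (t-s) p).1
            = (T s (T t p)).1 + (R (T (t-s) p)).1 := by rw [h1, hRapply]
          _ = (T s (T t p)).1 + (T s (R (T t p))).1 := by rw [h2, hRapply]
          _ = (T s (T t p) + T s (R (T t p))).1 := (Prod.fst_add _ _).symm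
          _ = (T s (T t p + R (T t p))).1 := by rw [map_add]
          _ = (T s (((T t p).1, 0) + ((T t p).1, 0))).1 := by rw [hadd]
          _ = (T s ((T t p).1, 0)).1 + (T s ((T t p).1, 0)).1 := by
              rw [map_add, Prod.fst_add]
      rw [hCdef _ htps f, hCdef _ hts f, hCdef _ ht f, hCdef _ hs ((T t p).1),
        ← map_add, ← map_add, hF]
  -- extension lemma by density of the range of i
  have hext : ∀ (A B : E →L[ℝ] E), (∀ g : F, A (i g) = B (i g)) → A = B := by
    intro A B h
    have : (A : E → E) = B :=
      Continuous.ext_on hdense A.continuous B.continuous (by rintro x ⟨g, rfl⟩; exact h g)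
    exact ContinuousLinearMap.ext fun x => congrFun this x
  -- operator versions
  have hP : ∀ t s : ℝ, 0 ≤ s → s ≤ t → C (t+s) + C (t-s) = 2 • (C t ∘L C s) := by
    intro t s hs hst
    refine hext _ _ fun g => ?_
    have h := (hmain t s hs hst g).1
    simpa [two_smul, ContinuousLinearMap.add_apply] using h
  have hQ : ∀ t s : ℝ, 0 ≤ s → s ≤ t → C (t+s) + C (t-s) = 2 • (C s ∘L C t) := by
    intro t s hs hst
    refine hext _ _ fun g => ?_
    have h := (hmain t s hs hst g).2
    simpa [two_smul, ContinuousLinearMap.add_apply] using h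
  constructor
  · refine hext _ _ fun g => ?_
    rw [hCdef 0 le_rfl g, hT0]
    simp
  · have hnn : ∀ t s : ℝ, 0 ≤ t → 0 ≤ s → C (t+s) + C (t-s) = 2 • (C t ∘L C s) := by
      intro t s ht hs
      rcases le_total s t with h | h
      · exact hP t s hs h
      · have hq := hQ s t ht h
        rw [add_comm s t, show s - t = -(t - s) from by ring, hCeven] at hq
        exact hq
    have hnt : ∀ t s : ℝ, 0 ≤ t → C (t+s) + C (t-s) = 2 • (C t ∘L C s) := by
      intro t s ht
      rcases le_total 0 s with h | h
      · exact hnn t s ht h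
      · have hq := hnn t (-s) ht (neg_nonneg.2 h)
        rw [hCeven s, show t + -s = t - s from by ring,
          show t - -s = t + s from by ring, add_comm (C (t-s)) (C (t+s))] at hq
        exact hq
    intro t s
    rcases le_total 0 t with h | h
    · exact hnt t s h
    · have hq := hnt (-t) s (neg_nonneg.2 h)
      rw [hCeven t, show -t + s = -(t - s) from by ring,
        show -t - s = -(t + s) from by ring, hCeven, hCeven,
        add_comm (C (t-s)) (C (t+s))] at hq
      exact hq
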